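/- Define C_est(α) = [S(α) − 2α]/(2√(1+α²) − 2α), where S(α) = (1−p)[α(cosθ₂ + cosθ₃) + sinθ₁(sinθ₂ − sinθ₃) + cosθ₁(cosθ₂ − cosθ₃)] with 0 ≤ p ≤ 1. If (1−p)[sinθ₁(sinθ₂ − sinθ₃) + cosθ₂(√2+1+cosθ₁) + cosθ₃(√2+1−cosθ₁)] > 2(1+√2), then C_est(1) > 0 and there exists α > 1 with C_est(α) > C_est(1). -/

import Mathlib

open Real Filter Topology

lemma aux_deriv (A B : ℝ) :
    HasDerivAt (fun α : ℝ => ((A - 2) * α + B) / (2 * Real.sqrt (1 + α ^ 2) - 2 * α))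
      (((A - 2) * (2 * Real.sqrt 2 - 2) - ((A - 2) * 1 + B) * (Real.sqrt 2 - 2))
        / (2 * Real.sqrt 2 - 2) ^ 2) 1 := by
  have hs2 : Real.sqrt (1 + (1:ℝ) ^ 2) = Real.sqrt 2 := by norm_num
  have hnum : HasDerivAt (fun α : ℝ => (A - 2) * α + B) (A - 2) 1 := by
    simpa using ((hasDerivAt_id (1:ℝ)).const_mul (A - 2)).add_const B
  have hinner : HasDerivAt (fun α : ℝ => 1 + α ^ 2) 2 1 := by
    simpa using (hasDerivAt_pow 2 (1:ℝ)).const_add 1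
  have hsq : HasDerivAt (fun α : ℝ => Real.sqrt (1 + α ^ 2))
      (2 / (2 * Real.sqrt (1 + (1:ℝ) ^ 2))) 1 := by
    refine hinner.sqrt ?_
    norm_num
  have hden : HasDerivAt (fun α : ℝ => 2 * Real.sqrt (1 + α ^ 2) - 2 * α)
      (Real.sqrt 2 - 2) 1 := by
    have h1 : HasDerivAt (fun α : ℝ => 2 * Real.sqrt (1 + α ^ 2) - 2 * α)
        (2 * (2 / (2 * Real.sqrt (1 + (1:ℝ) ^ 2))) - 2 * 1) 1 :=
      (hsq.const_mul 2).sub ((hasDerivAt_id (1:ℝ)).const_mul 2)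
    have hs : Real.sqrt 2 ≠ 0 := by positivity
    convert h1 using 1
    rw [hs2]
    have h2 : Real.sqrt 2 ^ 2 = 2 := Real.sq_sqrt (by norm_num)
    field_simp
    nlinarith
  have hdne : 2 * Real.sqrt (1 + (1:ℝ) ^ 2) - 2 * 1 ≠ 0 := by
    rw [hs2]
    have : (1:ℝ) < Real.sqrt 2 := by
      have := Real.lt_sqrt (x := 1) (y := 2) (by norm_num)
      simpa using this.mpr (by norm_num)
    nlinarith
  have : HasDerivAt (fun α : ℝ => ((A - 2) * α + B) / (2 * Real.sqrt (1 + α ^ 2) - 2 * α)) _ 1 :=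
    hnum.div hden hdne
  simpa [show (1:ℝ)+1^2 = 2 by norm_num, show (1:ℝ)+1 = 2 by norm_num] using this

/-- Werner-state analogue: if the condition holds, the concurrence estimate is positive
at `α = 1` and improves for some `α > 1`. -/
theorem werner_better_alpha (p θ1 θ2 θ3 : ℝ) (hp0 : 0 ≤ p) (hp1 : p ≤ 1)
    (Sf : ℝ → ℝ)
    (hSf : Sf = fun α => (1 - p) * (α * (cos θ2 + cos θ3)
      + sin θ1 * (sin θ2 - sin θ3) + cos θ1 * (cos θ2 - cos θ3)))
    (Cest : ℝ → ℝ)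
    (hC : Cest = fun α => (Sf α - 2 * α) / (2 * Real.sqrt (1 + α ^ 2) - 2 * α))
    (hcond : (1 - p) * (sin θ1 * (sin θ2 - sin θ3)
      + cos θ2 * (Real.sqrt 2 + 1 + cos θ1) + cos θ3 * (Real.sqrt 2 + 1 - cos θ1))
      > 2 * (1 + Real.sqrt 2)) :
    Cest 1 > 0 ∧ ∃ α > (1 : ℝ), Cest α > Cest 1 := by
  set s := Real.sqrt 2 with hs
  have hs2 : s ^ 2 = 2 := Real.sq_sqrt (by norm_num)
  have hs1 : (1:ℝ) < s := by nlinarith [Real.sqrt_nonneg 2]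
  have hslt2 : s < 2 := by nlinarith [Real.sqrt_nonneg 2]
  set A := (1 - p) * (cos θ2 + cos θ3) with hA
  set B := (1 - p) * (sin θ1 * (sin θ2 - sin θ3) + cos θ1 * (cos θ2 - cos θ3)) with hB
  -- rewrite the condition
  have hcond' : (s + 1) * A + B > 2 * (1 + s) := by
    have : (s + 1) * A + B = (1 - p) * (sin θ1 * (sin θ2 - sin θ3)
      + cos θ2 * (s + 1 + cos θ1) + cos θ3 * (s + 1 - cos θ1)) := by
      rw [hA, hB]; ring
    rw [this]; exact hcond
  have hAle : A ≤ 2 := by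
    have h2 : cos θ2 ≤ 1 := cos_le_one θ2
    have h3 : cos θ3 ≤ 1 := cos_le_one θ3
    have h2' : -1 ≤ cos θ2 := neg_one_le_cos θ2
    have h3' : -1 ≤ cos θ3 := neg_one_le_cos θ3
    rw [hA]; nlinarith
  have hAB : A + B > 2 := by nlinarith
  -- Cest rewritten
  have hCeq : Cest = fun α : ℝ => ((A - 2) * α + B) / (2 * Real.sqrt (1 + α ^ 2) - 2 * α) := by
    funext α
    rw [hC, hSf]
    simp only
    congr 1
    rw [hA, hB]; ring
  have hC1 : Cest 1 = ((A - 2) * 1 + B) / (2 * s - 2) := by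
    rw [hCeq]
    norm_num
    rw [hs]
  have hden1 : (0:ℝ) < 2 * s - 2 := by linarith
  have hpos : Cest 1 > 0 := by
    rw [hC1]
    apply div_pos (by nlinarith) hden1
  refine ⟨hpos, ?_⟩
  -- derivative
  have hD := aux_deriv A B
  rw [← hCeq] at hD
  set D := ((A - 2) * (2 * s - 2) - ((A - 2) * 1 + B) * (s - 2)) / (2 * s - 2) ^ 2 with hDdef
  have hDpos : 0 < D := by
    apply div_pos ?_ (by positivity)
    -- numerator = (A-2)*s + B*(2-s) = (2-s)*((s+1)*A + B - 2*(1+s)) using s^2 = 2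
    nlinarith [mul_pos (sub_pos.mpr hslt2) (sub_pos.mpr hcond')]
  -- slope argument
  have hslope : Tendsto (slope Cest 1) (𝓝[≠] (1:ℝ)) (𝓝 D) :=
    hasDerivAt_iff_tendsto_slope.mp hD
  have hev : ∀ᶠ α in 𝓝[>] (1:ℝ), 0 < slope Cest 1 α := by
    have h1 : ∀ᶠ x in 𝓝 D, 0 < x := eventually_gt_nhds hDpos
    exact (hslope.eventually h1).filter_mono
      (nhdsWithin_mono 1 (fun x hx => ne_of_gt hx))
  have hmem : ∀ᶠ α in 𝓝[>] (1:ℝ), α ∈ Set.Ioi (1:ℝ) := self_mem_nhdsWithin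
  obtain ⟨α, hα1, hα2⟩ := (hev.and hmem).exists
  refine ⟨α, hα2, ?_⟩
  have hαgt : (1:ℝ) < α := hα2
  have : 0 < (Cest α - Cest 1) / (α - 1) := by
    have := hα1
    rwa [slope_def_field] at this
  have hd : 0 < α - 1 := by linarith
  nlinarith [mul_pos this hd, div_mul_cancel₀ (Cest α - Cest 1) (ne_of_gt hd)]
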